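/- Let E be a finite-dimensional normed real vector space, κ > 0, C ≥ 0, and let (A_n) be a sequence of continuous linear isomorphisms of E and (g_n) a sequence of C¹ maps of E with g_n(0) = 0 and D_0 g_n = Id, such that: (i) f := A_n⁻¹ ∘ g_n ∘ A_n is the same map f for all n; (ii) ‖A_n‖ → 0 and ‖A_n⁻¹‖ · ‖A_n‖^{1+κ} → 0 as n → ∞; (iii) ‖D_w g_n − Id‖ ≤ C‖w‖^κ for all n and all w with ‖w‖ ≤ 1. Then f(z) = z for all z with ‖z‖ ≤ 1. -/

import Mathlib

open Filter Topology

/-- Discrete-time uniqueness for non-stationary linearizations: if a map `f` is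
simultaneously conjugated, `f = Aₙ⁻¹ ∘ gₙ ∘ Aₙ`, to C¹ maps `gₙ` fixing `0` with
`D₀gₙ = Id` and Hölder control `‖D_w gₙ − Id‖ ≤ C‖w‖^κ` on the unit ball, where
`‖Aₙ‖ → 0` and `‖Aₙ⁻¹‖·‖Aₙ‖^{1+κ} → 0`, then `f` is the identity on the unit ball. -/
theorem stmt_6 (E : Type*) [NormedAddCommGroup E] [NormedSpace ℝ E]
    [FiniteDimensional ℝ E]
    (κ C : ℝ) (hκ : 0 < κ) (hC : 0 ≤ C)
    (A : ℕ → (E ≃L[ℝ] E)) (g : ℕ → E → E) (f : E → E)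
    (hg : ∀ n, ContDiff ℝ 1 (g n))
    (hg0 : ∀ n, g n 0 = 0)
    (hgD : ∀ n, fderiv ℝ (g n) 0 = ContinuousLinearMap.id ℝ E)
    (hconj : ∀ n, ∀ x : E, (A n).symm (g n (A n x)) = f x)
    (hAn : Tendsto (fun n => ‖((A n : E →L[ℝ] E))‖) atTop (nhds 0))
    (hAn' : Tendsto
      (fun n => ‖((A n).symm : E →L[ℝ] E)‖ * ‖((A n : E →L[ℝ] E))‖ ^ (1 + κ))
      atTop (nhds 0))
    (hhold : ∀ n, ∀ w : E, ‖w‖ ≤ 1 →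
      ‖fderiv ℝ (g n) w - ContinuousLinearMap.id ℝ E‖ ≤ C * ‖w‖ ^ κ) :
    ∀ z : E, ‖z‖ ≤ 1 → f z = z := by
  intro z hz
  have key : ∀ n : ℕ, ‖((A n : E →L[ℝ] E))‖ ≤ 1 →
      ‖f z - z‖ ≤ C * (‖((A n).symm : E →L[ℝ] E)‖ * ‖((A n : E →L[ℝ] E))‖ ^ (1 + κ)) := by
    intro n hn
    set w : E := A n z with hwdef
    have hwn : ‖w‖ ≤ ‖((A n : E →L[ℝ] E))‖ * ‖z‖ := (A n : E →L[ℝ] E).le_opNorm z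
    have hAz : ‖((A n : E →L[ℝ] E))‖ * ‖z‖ ≤ ‖((A n : E →L[ℝ] E))‖ := by
      nlinarith [norm_nonneg ((A n : E →L[ℝ] E))]
    have hwA : ‖w‖ ≤ ‖((A n : E →L[ℝ] E))‖ := hwn.trans hAz
    have hw1 : ‖w‖ ≤ 1 := hwA.trans hn
    -- mean value inequality on the segment from 0 to w
    have hmvt : ‖g n w - w‖ ≤ (C * ‖w‖ ^ κ) * ‖w‖ := by
      have hdiff : ∀ x ∈ Metric.closedBall (0 : E) ‖w‖,
          DifferentiableAt ℝ (fun x => g n x - x) x := fun x _ =>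
        (((hg n).differentiable one_ne_zero) x).sub differentiableAt_id
      have hbound : ∀ x ∈ Metric.closedBall (0 : E) ‖w‖,
          ‖fderiv ℝ (fun x => g n x - x) x‖ ≤ C * ‖w‖ ^ κ := by
        intro x hx
        have hxw : ‖x‖ ≤ ‖w‖ := by simpa using hx
        have hx1 : ‖x‖ ≤ 1 := hxw.trans hw1
        have hder : fderiv ℝ (fun x => g n x - x) x
            = fderiv ℝ (g n) x - ContinuousLinearMap.id ℝ E := by
          rw [fderiv_fun_sub (((hg n).differentiable one_ne_zero) x) differentiableAt_fun_id,
            fderiv_id']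
        rw [hder]
        refine (hhold n x hx1).trans ?_
        gcongr
      have := (convex_closedBall (0 : E) ‖w‖).norm_image_sub_le_of_norm_fderiv_le
        hdiff hbound (Metric.mem_closedBall_self (norm_nonneg w))
        (by simpa using Metric.mem_closedBall_self (norm_nonneg w) :
          w ∈ Metric.closedBall (0 : E) ‖w‖)
      simpa [hg0 n] using this
    have hfz : f z - z = (A n).symm (g n w - w) := by
      rw [map_sub, hconj n z, hwdef, (A n).symm_apply_apply]
    have h1 : ‖f z - z‖ ≤ ‖((A n).symm : E →L[ℝ] E)‖ * ((C * ‖w‖ ^ κ) * ‖w‖) := by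
      rw [hfz]
      exact (((A n).symm : E →L[ℝ] E).le_opNorm _).trans (by gcongr)
    refine h1.trans ?_
    have hrpow : ‖w‖ ^ κ * ‖w‖ ≤ ‖((A n : E →L[ℝ] E))‖ ^ (1 + κ) := by
      have h2 : ‖((A n : E →L[ℝ] E))‖ ^ (1 + κ)
          = ‖((A n : E →L[ℝ] E))‖ * ‖((A n : E →L[ℝ] E))‖ ^ κ := by
        rw [Real.rpow_add' (norm_nonneg _) (by positivity), Real.rpow_one]
      rw [h2, mul_comm (‖w‖ ^ κ)]
      gcongr
    calc ‖((A n).symm : E →L[ℝ] E)‖ * ((C * ‖w‖ ^ κ) * ‖w‖)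
        = C * (‖((A n).symm : E →L[ℝ] E)‖ * (‖w‖ ^ κ * ‖w‖)) := by ring
      _ ≤ C * (‖((A n).symm : E →L[ℝ] E)‖ * ‖((A n : E →L[ℝ] E))‖ ^ (1 + κ)) := by
          gcongr
  have hlim : Tendsto (fun n => C *
      (‖((A n).symm : E →L[ℝ] E)‖ * ‖((A n : E →L[ℝ] E))‖ ^ (1 + κ))) atTop (nhds 0) := by
    simpa using hAn'.const_mul C
  have hev : ∀ᶠ n in atTop, ‖f z - z‖ ≤ C *
      (‖((A n).symm : E →L[ℝ] E)‖ * ‖((A n : E →L[ℝ] E))‖ ^ (1 + κ)) := by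
    filter_upwards [hAn.eventually_le_const (by norm_num : (0:ℝ) < 1)] with n hn
    exact key n hn
  have h0 : ‖f z - z‖ ≤ 0 := ge_of_tendsto hlim hev
  have := norm_le_zero_iff.mp h0
  rwa [sub_eq_zero] at this
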